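/- Let A = (Q, Σ, δ, γ) be a synchronizing WFA with |Q| = n ≥ 1 and γ(a) ≤ k for all a ∈ Σ. Then A admits a synchronizing word u with γ(u) ≤ k · (n - 1) · C(n, 2); in particular the minimal weight of a synchronizing word is at most k · n³ / 2. -/

import Mathlib

/-- Transition function extended to words. -/
def deltaStar {Q A : Type*} (δ : Q → A → Q) (q : Q) (w : List A) : Q :=
  w.foldl δ q

/-- Additive weight of a word. -/
def wordWeight {A : Type*} (γ : A → ℕ) (w : List A) : ℕ :=
  (w.map γ).sum

/-- Image of a set of states under a word. -/
def setImage {Q A : Type*} [DecidableEq Q] (δ : Q → A → Q) (P : Finset Q) (w : List A) : Finset Q :=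
  P.image (fun q => deltaStar δ q w)

lemma deltaStar_append {Q A : Type*} (δ : Q → A → Q) (q : Q) (u v : List A) :
    deltaStar δ q (u ++ v) = deltaStar δ (deltaStar δ q u) v :=
  List.foldl_append

lemma pair_merge_short {Q A : Type*} [Fintype Q] [DecidableEq Q] (δ : Q → A → Q)
    (p q : Q) (w : List A) (hw : deltaStar δ p w = deltaStar δ q w) :
    ∃ u : List A, deltaStar δ p u = deltaStar δ q u ∧
      u.length ≤ (Fintype.card Q).choose 2 := by
  set C := (Fintype.card Q).choose 2 with hC
  suffices H : ∀ N, ∀ w : List A, w.length ≤ N → deltaStar δ p w = deltaStar δ q w →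
      ∃ u, deltaStar δ p u = deltaStar δ q u ∧ u.length ≤ C by
    exact H w.length w le_rfl hw
  intro N
  induction N with
  | zero =>
    intro w hlen hw
    exact ⟨w, hw, le_trans hlen (Nat.zero_le _)⟩
  | succ N ih =>
    intro w hlen hw
    by_cases hshort : w.length ≤ C
    · exact ⟨w, hw, hshort⟩
    push_neg at hshort
    by_cases hdiag : ∃ i ≤ C, deltaStar δ p (w.take i) = deltaStar δ q (w.take i)
    · obtain ⟨i, hi, hmerge⟩ := hdiag
      refine ⟨w.take i, hmerge, ?_⟩
      simp only [List.length_take]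
      omega
    push_neg at hdiag
    -- a helper: cut out the middle between two positions with equal unordered pairs
    have main : ∀ i j : ℕ, i < j → j ≤ C →
        s(deltaStar δ p (w.take i), deltaStar δ q (w.take i)) =
        s(deltaStar δ p (w.take j), deltaStar δ q (w.take j)) →
        ∃ u, deltaStar δ p u = deltaStar δ q u ∧ u.length ≤ C := by
      intro i j hij hjC hsym
      set a := deltaStar δ p (w.take i)
      set b := deltaStar δ q (w.take i)
      set c := deltaStar δ p (w.take j)
      set d := deltaStar δ q (w.take j)
      have hwsplit : w.take j ++ w.drop j = w := List.take_append_drop j w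
      have hcd : deltaStar δ c (w.drop j) = deltaStar δ d (w.drop j) := by
        have h1 : deltaStar δ p w = deltaStar δ c (w.drop j) := by
          conv_lhs => rw [← hwsplit]
          rw [deltaStar_append]
        have h2 : deltaStar δ q w = deltaStar δ d (w.drop j) := by
          conv_lhs => rw [← hwsplit]
          rw [deltaStar_append]
        rw [← h1, ← h2, hw]
      have hab : deltaStar δ a (w.drop j) = deltaStar δ b (w.drop j) := by
        rcases Sym2.eq_iff.mp hsym with ⟨hac, hbd⟩ | ⟨had, hbc⟩
        · rw [hac, hbd]; exact hcd
        · rw [had, hbc]; exact hcd.symm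
      refine ih (w.take i ++ w.drop j) ?_ ?_
      · have hjw : j ≤ w.length := le_of_lt (lt_of_le_of_lt hjC hshort)
        simp only [List.length_append, List.length_take, List.length_drop]
        omega
      · rw [deltaStar_append, deltaStar_append]
        exact hab
    -- pigeonhole on non-diagonal unordered pairs
    have hcard : Fintype.card {s : Sym2 Q // ¬ s.IsDiag} = C := by
      rw [hC, Sym2.card_subtype_not_diag]
    set f : Fin (C + 1) → {s : Sym2 Q // ¬ s.IsDiag} := fun i =>
      ⟨s(deltaStar δ p (w.take i), deltaStar δ q (w.take i)), by
        rw [Sym2.mk_isDiag_iff]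
        exact hdiag i (Nat.lt_succ_iff.mp i.isLt)⟩ with hf
    obtain ⟨i, j, hij, hfij⟩ :=
      Fintype.exists_ne_map_eq_of_card_lt f (by simp [hcard])
    have hvij : s(deltaStar δ p (w.take (i : ℕ)), deltaStar δ q (w.take (i : ℕ))) =
        s(deltaStar δ p (w.take (j : ℕ)), deltaStar δ q (w.take (j : ℕ))) := by
      have := congrArg Subtype.val hfij
      simpa [hf] using this
    have hij' : (i : ℕ) ≠ (j : ℕ) := fun h => hij (Fin.ext h)
    rcases lt_or_gt_of_ne hij' with hlt | hlt
    · exact main i j hlt (Nat.lt_succ_iff.mp j.isLt) hvij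
    · exact main j i hlt (Nat.lt_succ_iff.mp i.isLt) hvij.symm

lemma shrink_step {Q A : Type*} [Fintype Q] [DecidableEq Q] (δ : Q → A → Q)
    (hsync : ∃ (w : List A) (qbar : Q), ∀ p : Q, deltaStar δ p w = qbar)
    (S : Finset Q) (hS : 1 < S.card) :
    ∃ u : List A, (setImage δ S u).card < S.card ∧
      u.length ≤ (Fintype.card Q).choose 2 := by
  obtain ⟨p, hp, q, hq, hpq⟩ := Finset.one_lt_card.mp hS
  obtain ⟨w, qbar, hwsync⟩ := hsync
  obtain ⟨u, hu, hlen⟩ := pair_merge_short δ p q w (by rw [hwsync p, hwsync q])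
  refine ⟨u, ?_, hlen⟩
  have hle : (setImage δ S u).card ≤ S.card := Finset.card_image_le
  rcases lt_or_eq_of_le hle with h | h
  · exact h
  · exact absurd (Finset.injOn_of_card_image_eq h hp hq hu) hpq

lemma sync_from_set {Q A : Type*} [Fintype Q] [DecidableEq Q] (δ : Q → A → Q)
    (hsync : ∃ (w : List A) (qbar : Q), ∀ p : Q, deltaStar δ p w = qbar) :
    ∀ m, ∀ S : Finset Q, S.card ≤ m → S.Nonempty →
      ∃ u : List A, (setImage δ S u).card = 1 ∧
        u.length ≤ (S.card - 1) * (Fintype.card Q).choose 2 := by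
  intro m
  induction m with
  | zero =>
    intro S hcard hne
    have := hne.card_pos
    omega
  | succ m ih =>
    intro S hcard hne
    by_cases h1 : S.card ≤ 1
    · have hS1 : S.card = 1 := le_antisymm h1 (Finset.one_le_card.mpr hne)
      refine ⟨[], ?_, by simp⟩
      simpa [setImage, deltaStar] using hS1
    push_neg at h1
    obtain ⟨u₁, hlt, hlen1⟩ := shrink_step δ hsync S h1
    set C := (Fintype.card Q).choose 2
    set S' := setImage δ S u₁ with hS'
    have hne' : S'.Nonempty := hne.image _
    obtain ⟨u₂, hone, hlen2⟩ := ih S' (by omega) hne'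
    refine ⟨u₁ ++ u₂, ?_, ?_⟩
    · have hcomp : setImage δ S (u₁ ++ u₂) = setImage δ S' u₂ := by
        simp only [setImage, hS', Finset.image_image]
        apply Finset.image_congr
        intro x _
        simp [Function.comp, deltaStar_append]
      rw [hcomp]; exact hone
    · have hstep : S'.card - 1 ≤ S.card - 2 := by omega
      have : u₁.length + u₂.length ≤ C + (S.card - 2) * C :=
        add_le_add hlen1 (le_trans hlen2 (Nat.mul_le_mul_right _ hstep))
      have heq : (S.card - 1) * C = (S.card - 2) * C + C := by
        have h2 : S.card - 1 = (S.card - 2) + 1 := by omega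
        rw [h2, Nat.succ_mul]
      simp only [List.length_append]
      omega

theorem sync_word_weight_bound {Q A : Type*} [Fintype Q] [Nonempty Q]
    (δ : Q → A → Q) (γ : A → ℕ) (k n : ℕ) (hn : n = Fintype.card Q)
    (hn1 : 1 ≤ n) (hk : ∀ a : A, γ a ≤ k)
    (hsync : ∃ (w : List A) (qbar : Q), ∀ p : Q, deltaStar δ p w = qbar) :
    ∃ u : List A, (∃ qbar : Q, ∀ p : Q, deltaStar δ p u = qbar) ∧
      wordWeight γ u ≤ k * (n - 1) * n.choose 2 ∧
      wordWeight γ u ≤ k * n ^ 3 / 2 := by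
  classical
  obtain ⟨u, hcard, hlen⟩ := sync_from_set δ hsync (Fintype.card Q) Finset.univ
    (by simp) Finset.univ_nonempty
  obtain ⟨qbar, hq⟩ := Finset.card_eq_one.mp hcard
  have hsyncu : ∀ p : Q, deltaStar δ p u = qbar := by
    intro p
    have hmem : deltaStar δ p u ∈ setImage δ Finset.univ u :=
      Finset.mem_image_of_mem _ (Finset.mem_univ p)
    rw [hq] at hmem
    simpa using hmem
  have hwlen : wordWeight γ u ≤ k * u.length := by
    unfold wordWeight
    calc (u.map γ).sum ≤ (u.map γ).length • k := by
          apply List.sum_le_card_nsmul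
          intro x hx
          obtain ⟨a, _, rfl⟩ := List.mem_map.mp hx
          exact hk a
      _ = u.length * k := by simp [smul_eq_mul]
      _ = k * u.length := Nat.mul_comm _ _
  have hbound1 : wordWeight γ u ≤ k * (n - 1) * n.choose 2 := by
    calc wordWeight γ u ≤ k * u.length := hwlen
      _ ≤ k * ((Fintype.card Q - 1) * (Fintype.card Q).choose 2) :=
          Nat.mul_le_mul_left _ hlen
      _ = k * (n - 1) * n.choose 2 := by rw [hn, Nat.mul_assoc]
  have hdvd : 2 ∣ n * (n - 1) := by
    have h := Nat.even_mul_succ_self (n - 1)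
    have h1 : (n - 1) + 1 = n := by omega
    rw [h1] at h
    rw [Nat.mul_comm]
    exact h.two_dvd
  have hbound2 : k * (n - 1) * n.choose 2 ≤ k * n ^ 3 / 2 := by
    rw [Nat.choose_two_right, Nat.mul_div_assoc _ hdvd |>.symm]
    apply Nat.div_le_div_right
    calc k * (n - 1) * (n * (n - 1)) ≤ k * n * (n * n) := by
          apply Nat.mul_le_mul
          · exact Nat.mul_le_mul_left _ (Nat.sub_le n 1)
          · exact Nat.mul_le_mul_left _ (Nat.sub_le n 1)
      _ = k * n ^ 3 := by ring
  exact ⟨u, ⟨qbar, hsyncu⟩, hbound1, le_trans hbound1 hbound2⟩
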